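/- Let a > 0, b ≠ 0, d ∈ ℝ, and c > max(d, 0). The function φ(y) = (6(c-d)/b) · 1/(1 + cosh(√((c-d)/(ac)) · y)) is a C³ solution on ℝ of the ODE a c φ''' + b φ φ' + (d - c) φ' = 0. -/

import Mathlib

open Real

theorem bbm_smooth_solitary_wave (a b c d : ℝ) (ha : 0 < a) (hb : b ≠ 0)
    (hcd : d < c) (hc : 0 < c) :
    let φ : ℝ → ℝ := fun y => (6 * (c - d) / b) * (1 / (1 + Real.cosh (Real.sqrt ((c - d) / (a * c)) * y)))
    ContDiff ℝ 3 φ ∧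
      ∀ y : ℝ, a * c * iteratedDeriv 3 φ y + b * φ y * deriv φ y + (d - c) * deriv φ y = 0 := by
  intro φ
  set k : ℝ := Real.sqrt ((c - d) / (a * c)) with hk
  set K : ℝ := 6 * (c - d) / b with hK
  have hφ : φ = fun y => K * (1 + Real.cosh (k * y))⁻¹ := by
    funext y; simp [φ, one_div, hk, hK]
  have hk2 : k ^ 2 = (c - d) / (a * c) := Real.sq_sqrt (by
    have h1 : (0:ℝ) < c - d := by linarith
    positivity)
  have hne : ∀ y : ℝ, (1 + Real.cosh (k * y)) ≠ 0 := by
    intro y; have := Real.one_le_cosh (k * y); positivity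
  have hD : ∀ y : ℝ, HasDerivAt (fun y => 1 + Real.cosh (k * y)) (k * Real.sinh (k * y)) y := by
    intro y
    have h1 : HasDerivAt (fun y : ℝ => k * y) k y := by
      simpa using (hasDerivAt_id y).const_mul k
    simpa [mul_comm] using ((Real.hasDerivAt_cosh (k * y)).comp y h1).const_add 1
  have h01 : ∀ y : ℝ, HasDerivAt φ
      (-K * k * Real.sinh (k * y) / (1 + Real.cosh (k * y)) ^ 2) y := by
    intro y
    rw [hφ]
    have := ((hD y).inv (hne y)).const_mul K
    refine this.congr_deriv (Eq.symm ?_)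
    field_simp
  have h12 : ∀ y : ℝ, HasDerivAt (fun y => -K * k * Real.sinh (k * y) / (1 + Real.cosh (k * y)) ^ 2)
      (-K * k ^ 2 * (2 - Real.cosh (k * y)) / (1 + Real.cosh (k * y)) ^ 2) y := by
    intro y
    have h1 : HasDerivAt (fun y : ℝ => k * y) k y := by
      simpa using (hasDerivAt_id y).const_mul k
    have hs : HasDerivAt (fun y => -K * k * Real.sinh (k * y)) (-K * k * (k * Real.cosh (k * y))) y := by
      simpa [mul_comm, mul_assoc] using ((Real.hasDerivAt_sinh (k * y)).comp y h1).const_mul (-K * k)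
    have hg : HasDerivAt (fun y => (1 + Real.cosh (k * y)) ^ 2)
        (2 * (1 + Real.cosh (k * y)) ^ 1 * (k * Real.sinh (k * y))) y := (hD y).pow 2
    have := hs.div hg (pow_ne_zero 2 (hne y))
    refine this.congr_deriv (Eq.symm ?_)
    have hS : Real.sinh (k * y) ^ 2 = Real.cosh (k * y) ^ 2 - 1 := Real.sinh_sq (k * y)
    field_simp
    linear_combination (-2*K*k^2) * hS
  have h23 : ∀ y : ℝ, HasDerivAt (fun y => -K * k ^ 2 * (2 - Real.cosh (k * y)) / (1 + Real.cosh (k * y)) ^ 2)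
      (K * k ^ 3 * Real.sinh (k * y) * (5 - Real.cosh (k * y)) / (1 + Real.cosh (k * y)) ^ 3) y := by
    intro y
    have h1 : HasDerivAt (fun y : ℝ => k * y) k y := by
      simpa using (hasDerivAt_id y).const_mul k
    have hs : HasDerivAt (fun y => -K * k ^ 2 * (2 - Real.cosh (k * y)))
        (-K * k ^ 2 * (-(k * Real.sinh (k * y)))) y := by
      have h2 := (((Real.hasDerivAt_cosh (k * y)).comp y h1).const_sub 2).const_mul (-K * k ^ 2)
      refine h2.congr_deriv (Eq.symm ?_)
      ring
    have hg : HasDerivAt (fun y => (1 + Real.cosh (k * y)) ^ 2)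
        (2 * (1 + Real.cosh (k * y)) ^ 1 * (k * Real.sinh (k * y))) y := (hD y).pow 2
    have := hs.div hg (pow_ne_zero 2 (hne y))
    refine this.congr_deriv (Eq.symm ?_)
    field_simp
    ring
  have hderiv1 : deriv φ = fun y => -K * k * Real.sinh (k * y) / (1 + Real.cosh (k * y)) ^ 2 :=
    funext fun y => (h01 y).deriv
  have hderiv2 : deriv (deriv φ) = fun y => -K * k ^ 2 * (2 - Real.cosh (k * y)) / (1 + Real.cosh (k * y)) ^ 2 := by
    rw [hderiv1]; exact funext fun y => (h12 y).deriv
  have hit3 : ∀ y : ℝ, iteratedDeriv 3 φ y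
      = K * k ^ 3 * Real.sinh (k * y) * (5 - Real.cosh (k * y)) / (1 + Real.cosh (k * y)) ^ 3 := by
    intro y
    have h3 : iteratedDeriv 3 φ = deriv (deriv (deriv φ)) := by
      simp [iteratedDeriv_succ, iteratedDeriv_zero]
    rw [h3, hderiv2]
    exact (h23 y).deriv
  constructor
  · rw [hφ]
    exact contDiff_const.mul
      (((contDiff_const.add ((Real.contDiff_cosh.of_le le_top).comp
        (contDiff_const.mul contDiff_id)))).inv hne)
  · intro y
    rw [hit3 y, hderiv1, hφ]
    have hacne : a * c ≠ 0 := by positivity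
    have hack : a * c * k ^ 2 = c - d := by rw [hk2]; field_simp
    have hKb : b * K = 6 * (c - d) := by rw [hK]; field_simp
    have h1C : (1 + Real.cosh (k * y)) ≠ 0 := hne y
    clear hk hK
    clear_value φ K k
    set C := Real.cosh (k * y) with hC
    set S := Real.sinh (k * y) with hS
    field_simp
    linear_combination (K*k*S*(1+C)^3*(5-C)) * hack - (K*k*S*(1+C)^3) * hKb
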